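/- Let A and B be nonempty finite types, K a Hermitian cost matrix indexed by (A×B)×(A×B), ρ a state on A, X a finite type, p : X → ℝ a probability distribution (p x ≥ 0, Σ_x p x = 1), and σ_x a state on B for each x. Then 𝒦_K(ρ, Σ_x p x • σ_x) ≤ Σ_x p x · 𝒦_K(ρ, σ_x). -/

import Mathlib

open Matrix
open scoped Kronecker ComplexOrder

noncomputable def jordan {n : Type*} [Fintype n] (X Y : Matrix n n ℂ) : Matrix n n ℂ :=
  (2 : ℂ)⁻¹ • (X * Y + Y * X)

noncomputable def trB {A B : Type*} [Fintype B] (M : Matrix (A × B) (A × B) ℂ) : Matrix A A ℂ :=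
  Matrix.of fun i j => ∑ k, M (i, k) (j, k)

noncomputable def trA {A B : Type*} [Fintype A] (M : Matrix (A × B) (A × B) ℂ) : Matrix B B ℂ :=
  Matrix.of fun k l => ∑ i, M (i, k) (i, l)

def ptA {A B : Type*} (M : Matrix (A × B) (A × B) ℂ) : Matrix (A × B) (A × B) ℂ :=
  Matrix.of fun p q => M (q.1, p.2) (p.1, q.2)

def swap (A : Type*) [DecidableEq A] : Matrix (A × A) (A × A) ℂ :=
  Matrix.of fun p q => if p.1 = q.2 ∧ p.2 = q.1 then 1 else 0

def IsState {A : Type*} [Fintype A] (ρ : Matrix A A ℂ) : Prop :=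
  ρ.PosSemidef ∧ ρ.trace = 1

def IsJam {A B : Type*} [Fintype A] [Fintype B] [DecidableEq A]
    (J : Matrix (A × B) (A × B) ℂ) : Prop :=
  (ptA J).PosSemidef ∧ trB J = 1

noncomputable def cost {A B : Type*} [Fintype A] [Fintype B] [DecidableEq A] [DecidableEq B]
    (K : Matrix (A × B) (A × B) ℂ) (ρ : Matrix A A ℂ) (σ : Matrix B B ℂ) : ℝ :=
  sInf { r : ℝ | ∃ J : Matrix (A × B) (A × B) ℂ, IsJam J ∧
      trA ((ρ ⊗ₖ (1 : Matrix B B ℂ)) * J) = σ ∧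
      r = (Matrix.trace (K * jordan (ρ ⊗ₖ (1 : Matrix B B ℂ)) J)).re }

/-! ### Auxiliary lemmas -/

lemma psd_diag_re_nonneg {n : Type*} [Fintype n] {M : Matrix n n ℂ}
    (h : M.PosSemidef) (a : n) : 0 ≤ (M a a).re := by
  classical
  have := h.diag_nonneg (i := a)
  simpa using (Complex.le_def.mp this).1

lemma psd_entry_le_trace {n : Type*} [Fintype n] [DecidableEq n] {M : Matrix n n ℂ}
    (h : M.PosSemidef) (a b : n) : ‖M a b‖ ≤ M.trace.re := by
  have hdiag : ∀ c, 0 ≤ (M c c).re := psd_diag_re_nonneg h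
  have htr : ∀ c, (M c c).re ≤ M.trace.re := by
    intro c
    rw [Matrix.trace, Complex.re_sum]
    exact Finset.single_le_sum (f := fun c => (M c c).re) (fun i _ => hdiag i) (Finset.mem_univ c)
  obtain ⟨C, hC⟩ : ∃ C : Matrix n n ℂ, M = Cᴴ * C := by
    open MatrixOrder in exact CStarAlgebra.nonneg_iff_eq_star_mul_self.mp h.nonneg
  set u : EuclideanSpace ℂ _ := WithLp.toLp 2 (fun c => C c a) with hu
  set v : EuclideanSpace ℂ _ := WithLp.toLp 2 (fun c => C c b) with hv
  have hMab : M a b = inner ℂ u v := by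
    rw [hC]
    simp [Matrix.mul_apply, Matrix.conjTranspose_apply, PiLp.inner_apply, hu, hv, mul_comm]
  have h1 : ‖M a b‖ ≤ ‖u‖ * ‖v‖ := hMab ▸ norm_inner_le_norm u v
  have hnu : ‖u‖ ^ 2 = (M a a).re := by
    rw [hC, ← inner_self_eq_norm_sq (𝕜 := ℂ)]
    simp [Matrix.mul_apply, Matrix.conjTranspose_apply, PiLp.inner_apply, hu, mul_comm,
      Complex.re_sum, -inner_self_eq_norm_sq_to_K]
  have hnv : ‖v‖ ^ 2 = (M b b).re := by
    rw [hC, ← inner_self_eq_norm_sq (𝕜 := ℂ)]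
    simp [Matrix.mul_apply, Matrix.conjTranspose_apply, PiLp.inner_apply, hv, mul_comm,
      Complex.re_sum, -inner_self_eq_norm_sq_to_K]
  have h2 : ‖u‖ * ‖v‖ ≤ M.trace.re := by
    have h3 : ‖u‖ ≤ Real.sqrt M.trace.re := by
      rw [← Real.sqrt_sq (norm_nonneg u), hnu]
      exact Real.sqrt_le_sqrt (htr a)
    have h4 : ‖v‖ ≤ Real.sqrt M.trace.re := by
      rw [← Real.sqrt_sq (norm_nonneg v), hnv]
      exact Real.sqrt_le_sqrt (htr b)
    calc ‖u‖ * ‖v‖ ≤ Real.sqrt M.trace.re * Real.sqrt M.trace.re :=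
          mul_le_mul h3 h4 (norm_nonneg v) (Real.sqrt_nonneg _)
      _ = M.trace.re := Real.mul_self_sqrt ((hdiag a).trans (htr a))
  exact h1.trans h2

lemma psd_smul' {n : Type*} [Fintype n] {M : Matrix n n ℂ}
    (h : M.PosSemidef) {c : ℝ} (hc : 0 ≤ c) : ((c : ℂ) • M).PosSemidef := by
  constructor
  · unfold Matrix.IsHermitian
    rw [Matrix.conjTranspose_smul, h.1.eq]
    congr 1
    simp [Complex.ext_iff]
  · intro x
    exact (Matrix.PosSemidef.smul h (a := (c : ℂ)) (by exact_mod_cast hc)).2 x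

lemma psd_sum' {n X : Type*} [Fintype n] [Fintype X] {M : X → Matrix n n ℂ}
    (h : ∀ x, (M x).PosSemidef) : (∑ x, M x).PosSemidef := by
  classical
  induction (Finset.univ : Finset X) using Finset.induction with
  | empty => simpa using Matrix.PosSemidef.zero
  | insert a s hx ih => rw [Finset.sum_insert hx]; exact (h _).add ih

lemma kron_conjTranspose' {A B : Type*} (X : Matrix A A ℂ) (Y : Matrix B B ℂ) :
    (X ⊗ₖ Y)ᴴ = Xᴴ ⊗ₖ Yᴴ := by
  ext p q
  simp [Matrix.conjTranspose_apply, Matrix.kroneckerMap_apply]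

lemma psd_one_kron {A B : Type*} [Fintype A] [Fintype B] [DecidableEq A] [DecidableEq B]
    {σ : Matrix B B ℂ} (hσ : σ.PosSemidef) : ((1 : Matrix A A ℂ) ⊗ₖ σ).PosSemidef := by
  obtain ⟨C, hC⟩ : ∃ C : Matrix B B ℂ, σ = Cᴴ * C := by
    open MatrixOrder in exact CStarAlgebra.nonneg_iff_eq_star_mul_self.mp hσ.nonneg
  suffices h : ∃ D : Matrix (A × B) (A × B) ℂ, (1 : Matrix A A ℂ) ⊗ₖ σ = Dᴴ * D by
    obtain ⟨D, hD⟩ := h; rw [hD]; exact Matrix.posSemidef_conjTranspose_mul_self D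
  refine ⟨(1 : Matrix A A ℂ) ⊗ₖ C, ?_⟩
  rw [hC, kron_conjTranspose', ← Matrix.mul_kronecker_mul]
  simp

/-- The set appearing in `cost` is nonempty: `J = 1 ⊗ σ` works. -/
lemma cost_set_nonempty {A B : Type*} [Fintype A] [Fintype B] [Nonempty A] [Nonempty B]
    [DecidableEq A] [DecidableEq B]
    (K : Matrix (A × B) (A × B) ℂ) {ρ : Matrix A A ℂ} (hρ : IsState ρ)
    {σ : Matrix B B ℂ} (hσ : IsState σ) :
    { r : ℝ | ∃ J : Matrix (A × B) (A × B) ℂ, IsJam J ∧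
      trA ((ρ ⊗ₖ (1 : Matrix B B ℂ)) * J) = σ ∧
      r = (Matrix.trace (K * jordan (ρ ⊗ₖ (1 : Matrix B B ℂ)) J)).re }.Nonempty := by
  refine ⟨_, (1 : Matrix A A ℂ) ⊗ₖ σ, ⟨?_, ?_⟩, ?_, rfl⟩
  · have : ptA ((1 : Matrix A A ℂ) ⊗ₖ σ) = (1 : Matrix A A ℂ) ⊗ₖ σ := by
      ext p q
      simp [ptA, Matrix.kroneckerMap_apply, Matrix.one_apply, eq_comm]
    rw [this]
    exact psd_one_kron hσ.1
  · ext i j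
    simp only [trB, Matrix.of_apply, Matrix.kroneckerMap_apply]
    have h1 : ∀ k : B, (1 : Matrix A A ℂ) (i,k).1 (j,k).1 * σ k k
        = (1 : Matrix A A ℂ) i j * σ k k := fun k => rfl
    rw [Finset.sum_congr rfl fun k _ => h1 k, ← Finset.mul_sum]
    have h2 : (∑ k, σ k k) = 1 := hσ.2
    rw [h2, mul_one]
  · rw [← Matrix.mul_kronecker_mul, Matrix.mul_one, Matrix.one_mul]
    ext k l
    simp only [trA, Matrix.of_apply, Matrix.kroneckerMap_apply]
    have h1 : ∀ i : A, ρ (i,k).1 (i,l).1 * σ (i,k).2 (i,l).2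
        = ρ i i * σ k l := fun i => rfl
    rw [Finset.sum_congr rfl fun i _ => h1 i, ← Finset.sum_mul]
    have h2 : (∑ i, ρ i i) = 1 := hρ.2
    rw [h2, one_mul]

/-- Rewrite the objective as `trace (L * J)` for `L = 2⁻¹ • (K*M + M*K)`. -/
lemma objective_eq {n : Type*} [Fintype n] (K M J : Matrix n n ℂ) :
    Matrix.trace (K * jordan M J) = Matrix.trace (((2 : ℂ)⁻¹ • (K * M + M * K)) * J) := by
  unfold jordan
  rw [Matrix.mul_smul, Matrix.smul_mul, Matrix.trace_smul, Matrix.trace_smul]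
  congr 1
  rw [Matrix.mul_add, Matrix.add_mul, Matrix.trace_add, Matrix.trace_add]
  congr 1
  · rw [← Matrix.mul_assoc, Matrix.mul_assoc]
  · rw [← Matrix.mul_assoc]
    exact Matrix.trace_mul_cycle K J M

lemma jam_entry_bound {A B : Type*} [Fintype A] [Fintype B] [DecidableEq A] [DecidableEq B]
    {J : Matrix (A × B) (A × B) ℂ} (hJ : IsJam J) (q p : A × B) :
    ‖J q p‖ ≤ (Fintype.card A : ℝ) := by
  have hqp : J q p = ptA J (p.1, q.2) (q.1, p.2) := rfl
  have hb := psd_entry_le_trace hJ.1 (p.1, q.2) (q.1, p.2)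
  have htr : (ptA J).trace = (Fintype.card A : ℂ) := by
    have h1 : (ptA J).trace = J.trace := by
      simp [Matrix.trace, ptA, Matrix.diag]
    have h2 : J.trace = ∑ i : A, trB J i i := by
      simp [Matrix.trace, trB, Matrix.diag, ← Finset.sum_product', Finset.sum_comm]
    rw [h1, h2, hJ.2]
    simp [Matrix.one_apply]
  rw [hqp]
  refine hb.trans ?_
  rw [htr]
  simp

lemma cost_set_bddBelow {A B : Type*} [Fintype A] [Fintype B] [Nonempty A] [Nonempty B]
    [DecidableEq A] [DecidableEq B]
    (K : Matrix (A × B) (A × B) ℂ) (ρ : Matrix A A ℂ) (τ : Matrix B B ℂ) :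
    BddBelow { r : ℝ | ∃ J : Matrix (A × B) (A × B) ℂ, IsJam J ∧
      trA ((ρ ⊗ₖ (1 : Matrix B B ℂ)) * J) = τ ∧
      r = (Matrix.trace (K * jordan (ρ ⊗ₖ (1 : Matrix B B ℂ)) J)).re } := by
  set M := ρ ⊗ₖ (1 : Matrix B B ℂ)
  set L := (2 : ℂ)⁻¹ • (K * M + M * K) with hL
  refine ⟨-(∑ p : A × B, ∑ q : A × B, ‖L p q‖ * (Fintype.card A : ℝ)), ?_⟩
  rintro r ⟨J, hJ, -, rfl⟩
  rw [objective_eq, ← hL]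
  have habs : ‖Matrix.trace (L * J)‖ ≤ ∑ p : A × B, ∑ q : A × B, ‖L p q‖ * (Fintype.card A : ℝ) := by
    rw [Matrix.trace]
    refine (norm_sum_le _ _).trans (Finset.sum_le_sum fun p _ => ?_)
    rw [Matrix.diag_apply, Matrix.mul_apply]
    refine (norm_sum_le _ _).trans (Finset.sum_le_sum fun q _ => ?_)
    rw [norm_mul]
    exact mul_le_mul_of_nonneg_left (jam_entry_bound hJ q p) (norm_nonneg _)
  have := (abs_le.mp ((Complex.abs_re_le_norm _).trans habs)).1
  linarith

lemma trA_mix {A B X : Type*} [Fintype A] [Fintype B] [Fintype X]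
    (c : X → ℂ) (N : X → Matrix (A × B) (A × B) ℂ) :
    trA (∑ x, c x • N x) = ∑ x, c x • trA (N x) := by
  ext k l
  simp only [trA, Matrix.of_apply, Matrix.sum_apply, Matrix.smul_apply, smul_eq_mul,
    Finset.mul_sum]
  rw [Finset.sum_comm]

lemma trB_mix {A B X : Type*} [Fintype A] [Fintype B] [Fintype X]
    (c : X → ℂ) (N : X → Matrix (A × B) (A × B) ℂ) :
    trB (∑ x, c x • N x) = ∑ x, c x • trB (N x) := by
  ext i j
  simp only [trB, Matrix.of_apply, Matrix.sum_apply, Matrix.smul_apply, smul_eq_mul,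
    Finset.mul_sum]
  rw [Finset.sum_comm]

lemma ptA_mix {A B X : Type*} [Fintype X]
    (c : X → ℂ) (N : X → Matrix (A × B) (A × B) ℂ) :
    ptA (∑ x, c x • N x) = ∑ x, c x • ptA (N x) := by
  ext p q
  simp [ptA, Matrix.sum_apply]

theorem stmt12 {A B X : Type*} [Fintype A] [Fintype B] [Fintype X]
    [Nonempty A] [Nonempty B] [DecidableEq A] [DecidableEq B]
    (K : Matrix (A × B) (A × B) ℂ) (hK : K.IsHermitian)
    (ρ : Matrix A A ℂ) (hρ : IsState ρ)
    (p : X → ℝ) (hp : ∀ x, 0 ≤ p x) (hp1 : ∑ x, p x = 1)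
    (σ : X → Matrix B B ℂ) (hσ : ∀ x, IsState (σ x)) :
    cost K ρ (∑ x, p x • σ x) ≤ ∑ x, p x * cost K ρ (σ x) := by
  set M := ρ ⊗ₖ (1 : Matrix B B ℂ) with hM
  refine le_of_forall_pos_le_add fun ε hε => ?_
  -- pick near-optimal plans for each x
  have hex : ∀ x : X, ∃ r : ℝ, (∃ J : Matrix (A × B) (A × B) ℂ, IsJam J ∧
      trA (M * J) = σ x ∧ r = (Matrix.trace (K * jordan M J)).re) ∧
      r < cost K ρ (σ x) + ε := fun x =>
    exists_lt_of_csInf_lt (cost_set_nonempty K hρ (hσ x))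
      (lt_add_of_pos_right _ hε)
  choose r hrS hrlt using hex
  choose J hJam hcon hval using hrS
  set Jmix : Matrix (A × B) (A × B) ℂ := ∑ x, ((p x : ℂ)) • J x with hJmix
  have hsum1 : (∑ x, (p x : ℂ)) = 1 := by
    rw [← Complex.ofReal_sum, hp1, Complex.ofReal_one]
  have hmem : (∑ x, p x * r x) ∈ { s : ℝ | ∃ J' : Matrix (A × B) (A × B) ℂ, IsJam J' ∧
      trA (M * J') = (∑ x, p x • σ x) ∧
      s = (Matrix.trace (K * jordan M J')).re } := by
    refine ⟨Jmix, ⟨?_, ?_⟩, ?_, ?_⟩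
    · rw [hJmix, ptA_mix]
      exact psd_sum' fun x => psd_smul' (hJam x).1 (hp x)
    · rw [hJmix, trB_mix]
      have : ∀ x, trB (J x) = 1 := fun x => (hJam x).2
      simp_rw [this, ← Finset.sum_smul, hsum1, one_smul]
    · rw [hJmix, Finset.mul_sum]
      simp_rw [Matrix.mul_smul]
      rw [trA_mix]
      simp_rw [hcon]
      refine Finset.sum_congr rfl fun x _ => ?_
      ext k l
      simp [Complex.real_smul]
    · rw [objective_eq, hJmix, Finset.mul_sum, Matrix.trace_sum]
      simp_rw [Matrix.mul_smul, Matrix.trace_smul, smul_eq_mul]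
      rw [Complex.re_sum]
      refine Finset.sum_congr rfl fun x _ => ?_
      rw [hval x, objective_eq]
      simp [Complex.ext_iff]
  have hle : cost K ρ (∑ x, p x • σ x) ≤ ∑ x, p x * r x :=
    csInf_le (cost_set_bddBelow K ρ _) hmem
  refine hle.trans ?_
  have : ∀ x ∈ Finset.univ, p x * r x ≤ p x * (cost K ρ (σ x) + ε) := fun x _ =>
    mul_le_mul_of_nonneg_left (hrlt x).le (hp x)
  refine (Finset.sum_le_sum this).trans ?_
  simp_rw [mul_add]
  rw [Finset.sum_add_distrib, ← Finset.sum_mul, hp1, one_mul]
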